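/- For every x ∈ ℝ and every c ≥ 0, the function r ↦ (1/r)·Argcosh(cosh(r·x) + (r²/2)·c) tends to √(x² + c) as r → 0⁺. -/

import Mathlib

open Filter Real Topology

/-- `Argcosh x = log(x + √(x² - 1))`, the inverse of `cosh` on `[1, ∞)`. -/
noncomputable def argcosh (x : ℝ) : ℝ := Real.log (x + Real.sqrt (x ^ 2 - 1))

lemma cosh_sub_one (t : ℝ) : Real.cosh t - 1 = 2 * Real.sinh (t / 2) ^ 2 := by
  have h := Real.cosh_two_mul (t / 2)
  have h2 : 2 * (t / 2) = t := by ring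
  rw [h2] at h
  rw [h, Real.cosh_sq]
  ring

/-- `sinh t / t → 1` as `t → 0` (punctured). -/
lemma tendsto_sinh_div : Tendsto (fun t : ℝ => Real.sinh t / t) (𝓝[≠] (0:ℝ)) (𝓝 1) := by
  have h := hasDerivAt_iff_tendsto_slope.mp (Real.hasDerivAt_sinh 0)
  simp only [Real.cosh_zero] at h
  have : (fun t : ℝ => Real.sinh t / t) =ᶠ[𝓝[≠] (0:ℝ)] slope Real.sinh 0 := by
    filter_upwards [self_mem_nhdsWithin] with t ht
    simp [slope_def_field]
  exact (tendsto_congr' this).mpr h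

/-- `log (1+u) / u → 1` as `u → 0` (punctured). -/
lemma tendsto_log_one_add_div : Tendsto (fun u : ℝ => Real.log (1 + u) / u) (𝓝[≠] (0:ℝ)) (𝓝 1) := by
  have h := hasDerivAt_iff_tendsto_slope.mp (Real.hasDerivAt_log (one_ne_zero))
  have hmap : Tendsto (fun u : ℝ => 1 + u) (𝓝[≠] (0:ℝ)) (𝓝[≠] (1:ℝ)) := by
    rw [tendsto_nhdsWithin_iff]
    constructor
    · have : Tendsto (fun u : ℝ => 1 + u) (𝓝 (0:ℝ)) (𝓝 (1:ℝ)) := by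
        exact (continuous_const.add continuous_id).tendsto' (0:ℝ) (1:ℝ) (by simp)
      exact this.mono_left nhdsWithin_le_nhds
    · filter_upwards [self_mem_nhdsWithin] with u hu
      simp only [Set.mem_compl_iff, Set.mem_singleton_iff] at hu ⊢
      intro h'
      exact hu (by linarith)
  have := h.comp hmap
  simp only [div_one, inv_one] at this
  have heq : (fun u : ℝ => Real.log (1 + u) / u) =ᶠ[𝓝[≠] (0:ℝ)]
      (slope Real.log 1) ∘ (fun u => 1 + u) := by
    filter_upwards [self_mem_nhdsWithin] with u hu
    simp [slope_def_field, Real.log_one]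
  exact (tendsto_congr' heq).mpr this

/-- Flat limit of the radial coordinate:
`(1/r)·Argcosh(cosh(rx) + (r²/2)c) → √(x² + c)` as `r → 0⁺`. -/
theorem flat_limit_argcosh (x c : ℝ) (hc : 0 ≤ c) :
    Tendsto
      (fun r : ℝ => (1 / r) * argcosh (Real.cosh (r * x) + r ^ 2 / 2 * c))
      (nhdsWithin 0 (Set.Ioi 0)) (nhds (Real.sqrt (x ^ 2 + c))) := by
  rcases eq_or_lt_of_le (by positivity : (0:ℝ) ≤ x ^ 2 + c) with hL | hL
  · -- degenerate case: x = 0, c = 0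
    have hx : x = 0 := by nlinarith [sq_nonneg x]
    have hc0 : c = 0 := by nlinarith [sq_nonneg x]
    subst hx; subst hc0
    have : (fun r : ℝ => (1 / r) * argcosh (Real.cosh (r * 0) + r ^ 2 / 2 * 0))
        = fun _ : ℝ => (0:ℝ) := by
      funext r
      simp [argcosh, Real.cosh_zero]
    rw [this]
    simp
  · -- main case: x^2 + c > 0
    set L : ℝ := x ^ 2 + c with hLdef
    set y : ℝ → ℝ := fun r => Real.cosh (r * x) + r ^ 2 / 2 * c with hy
    set g : ℝ → ℝ := fun r => 2 * (Real.sinh (r * x / 2) / r) ^ 2 + c / 2 with hg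
    -- Step A
    have hA : Tendsto (fun r : ℝ => Real.sinh (r * x / 2) / r) (𝓝[>] (0:ℝ)) (𝓝 (x / 2)) := by
      rcases eq_or_ne x 0 with hx | hx
      · simp [hx]
      · have hmap : Tendsto (fun r : ℝ => r * x / 2) (𝓝[>] (0:ℝ)) (𝓝[≠] (0:ℝ)) := by
          rw [tendsto_nhdsWithin_iff]
          constructor
          · have : Tendsto (fun r : ℝ => r * x / 2) (𝓝 (0:ℝ)) (𝓝 (0:ℝ)) := by
              simpa using ((continuous_id.mul continuous_const).div_const 2).tendsto (0:ℝ)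
            exact this.mono_left nhdsWithin_le_nhds
          · filter_upwards [self_mem_nhdsWithin] with r hr
            simp only [Set.mem_Ioi] at hr
            simp only [Set.mem_compl_iff, Set.mem_singleton_iff]
            intro h'
            rcases mul_eq_zero.mp (by linarith : r * x = 0) with h | h
            · exact absurd h (ne_of_gt hr)
            · exact hx h
        have h1 := (tendsto_sinh_div.comp hmap).mul_const (x / 2)
        rw [one_mul] at h1
        refine (tendsto_congr' ?_).mpr h1
        filter_upwards [self_mem_nhdsWithin] with r hr
        simp only [Set.mem_Ioi] at hr
        have hr0 : r ≠ 0 := ne_of_gt hr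
        simp only [Function.comp_apply]
        field_simp [Function.comp]
    -- Step B
    have hB : Tendsto g (𝓝[>] (0:ℝ)) (𝓝 (L / 2)) := by
      have h1 : Tendsto (fun r : ℝ => 2 * (Real.sinh (r * x / 2) / r) ^ 2 + c / 2)
          (𝓝[>] (0:ℝ)) (𝓝 (2 * (x / 2) ^ 2 + c / 2)) :=
        ((hA.pow 2).const_mul 2).add_const (c / 2)
      have : 2 * (x / 2) ^ 2 + c / 2 = L / 2 := by rw [hLdef]; ring
      rwa [this] at h1
    -- y r → 1
    have hY : Tendsto y (𝓝[>] (0:ℝ)) (𝓝 1) := by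
      have hcont : Continuous y := by
        apply Continuous.add
        · exact Real.continuous_cosh.comp (continuous_id.mul continuous_const)
        · exact ((continuous_pow 2).div_const 2).mul continuous_const
      have := hcont.tendsto 0
      simp only [hy, Real.cosh_zero] at this ⊢
      norm_num at this
      exact this.mono_left nhdsWithin_le_nhds
    -- key algebraic identity: y r - 1 = r^2 * g r for r > 0
    have hkey : ∀ r : ℝ, 0 < r → y r - 1 = r ^ 2 * g r := by
      intro r hr
      have h1 := cosh_sub_one (r * x)
      have hr0 : r ≠ 0 := ne_of_gt hr
      simp only [hy, hg]
      field_simp at h1 ⊢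
      nlinarith [h1]
    have hgnn : ∀ r : ℝ, 0 ≤ g r := by
      intro r
      have : 0 ≤ (Real.sinh (r * x / 2) / r) ^ 2 := sq_nonneg _
      simp only [hg]; linarith
    have hy1 : ∀ r : ℝ, 1 ≤ y r := by
      intro r
      have h1 : 1 ≤ Real.cosh (r * x) := Real.one_le_cosh _
      have h2 : 0 ≤ r ^ 2 / 2 * c := by positivity
      simp only [hy]; linarith
    set u : ℝ → ℝ := fun r => (y r - 1) + r * Real.sqrt (g r * (y r + 1)) with hu
    -- u r / r → sqrt L
    have hU : Tendsto (fun r => u r / r) (𝓝[>] (0:ℝ)) (𝓝 (Real.sqrt L)) := by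
      have hsqrt : Tendsto (fun r => Real.sqrt (g r * (y r + 1))) (𝓝[>] (0:ℝ))
          (𝓝 (Real.sqrt (L / 2 * (1 + 1)))) :=
        (Real.continuous_sqrt.tendsto _).comp (hB.mul (hY.add_const 1))
      have h2 : L / 2 * (1 + 1) = L := by ring
      rw [h2] at hsqrt
      have hrg : Tendsto (fun r : ℝ => r * g r) (𝓝[>] (0:ℝ)) (𝓝 (0 * (L / 2))) :=
        (tendsto_id.mono_left nhdsWithin_le_nhds).mul hB
      rw [zero_mul] at hrg
      have h3 := hrg.add hsqrt
      rw [zero_add] at h3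
      refine (tendsto_congr' ?_).mpr h3
      filter_upwards [self_mem_nhdsWithin] with r hr
      simp only [Set.mem_Ioi] at hr
      have hr0 : r ≠ 0 := ne_of_gt hr
      rw [hu]
      simp only
      rw [hkey r hr]
      field_simp
    have hsL : 0 < Real.sqrt L := Real.sqrt_pos.mpr hL
    -- eventually u r > 0
    have hupos : ∀ᶠ r in 𝓝[>] (0:ℝ), 0 < u r := by
      have hev : ∀ᶠ r in 𝓝[>] (0:ℝ), Real.sqrt L / 2 < u r / r :=
        hU.eventually_const_lt (by linarith)
      filter_upwards [hev, self_mem_nhdsWithin] with r h1 h2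
      simp only [Set.mem_Ioi] at h2
      have : 0 < u r / r := lt_trans (by positivity) h1
      exact (div_pos_iff.mp this).resolve_right (fun h => absurd h2 (not_lt.mpr h.2.le)) |>.1
    -- u → 0
    have hU0 : Tendsto u (𝓝[>] (0:ℝ)) (𝓝 0) := by
      have := hU.mul (tendsto_id.mono_left nhdsWithin_le_nhds : Tendsto id (𝓝[>] (0:ℝ)) (𝓝 (0:ℝ)))
      rw [mul_zero] at this
      refine (tendsto_congr' ?_).mpr this
      filter_upwards [self_mem_nhdsWithin] with r hr
      simp only [Set.mem_Ioi] at hr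
      field_simp
      rfl
    -- log(1+u)/u → 1
    have hlog : Tendsto (fun r => Real.log (1 + u r) / u r) (𝓝[>] (0:ℝ)) (𝓝 1) := by
      have hmap : Tendsto u (𝓝[>] (0:ℝ)) (𝓝[≠] (0:ℝ)) := by
        rw [tendsto_nhdsWithin_iff]
        exact ⟨hU0, hupos.mono fun r hr => by simp [ne_of_gt hr]⟩
      exact tendsto_log_one_add_div.comp hmap
    -- conclude
    have hfin := hlog.mul hU
    rw [one_mul] at hfin
    refine (tendsto_congr' ?_).mpr hfin
    filter_upwards [hupos, self_mem_nhdsWithin] with r hur hr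
    simp only [Set.mem_Ioi] at hr
    have hr0 : r ≠ 0 := ne_of_gt hr
    have hyr := hy1 r
    -- argcosh (y r) = log (1 + u r)
    have hsq : Real.sqrt ((y r) ^ 2 - 1) = r * Real.sqrt (g r * (y r + 1)) := by
      have h1 : (y r) ^ 2 - 1 = r ^ 2 * (g r * (y r + 1)) := by
        have := hkey r hr
        nlinarith [this]
      rw [h1, Real.sqrt_mul (sq_nonneg r), Real.sqrt_sq hr.le]
    have harg : argcosh (y r) = Real.log (1 + u r) := by
      rw [argcosh, hsq, hu]
      ring_nf
    show (1 / r) * argcosh (y r) = Real.log (1 + u r) / u r * (u r / r)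
    rw [harg]
    field_simp [ne_of_gt hur]
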